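/- arXiv:1602.05464 — 4 statements merged into one kernel-verified Lean document; each statement's English description precedes it below -/
import Mathlib

section
/- Let q₁, q₂, q₃ > 0 and consider aligned configurations of the three charges on a segment of length 1/2 (so that the closed polygonal perimeter equals 1). For each choice of intermediate charge q_i (with the other two at the endpoints), the minimal Coulomb energy over such aligned configurations equals 2(q₁q₂ + q₂q₃ + q₃q₁) + 4·√(q₁q₂q₃)·√(q_i). Consequently, if q₂ < q₁ and q₂ < q₃, then the minimal energy with q₂ intermediate is strictly smaller than the minimal energies with q₁ or q₃ intermediate. -/
lemma aligned_aux (a b c : ℝ) (ha : 0 < a) (hb : 0 < b) :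
    IsLeast ((fun x => a / x + b / (1 / 2 - x) + c) '' Set.Ioo 0 (1 / 2))
      (2 * a + 2 * b + 4 * Real.sqrt a * Real.sqrt b + c) := by
  set s := Real.sqrt a with hsdef
  set t := Real.sqrt b with htdef
  have hs : 0 < s := Real.sqrt_pos.mpr ha
  have ht : 0 < t := Real.sqrt_pos.mpr hb
  have hsa : s ^ 2 = a := Real.sq_sqrt ha.le
  have htb : t ^ 2 = b := Real.sq_sqrt hb.le
  have hst : 0 < s + t := by linarith
  constructor
  · refine ⟨s / (2 * (s + t)), ⟨by positivity, ?_⟩, ?_⟩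
    · rw [div_lt_iff₀ (by positivity)]; nlinarith
    · have h1 : (1 : ℝ) / 2 - s / (2 * (s + t)) = t / (2 * (s + t)) := by
        field_simp
        ring
      show a / (s / (2 * (s + t))) + b / (1 / 2 - s / (2 * (s + t))) + c = _
      rw [h1, ← hsa, ← htb]
      field_simp
      ring
  · rintro v ⟨x, ⟨hx0, hx2⟩, rfl⟩
    have hy : 0 < 1 / 2 - x := by linarith
    have key : 2 * a + 2 * b + 4 * s * t ≤ a / x + b / (1 / 2 - x) := by
      rw [div_add_div _ _ hx0.ne' hy.ne', le_div_iff₀ (by positivity)]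
      nlinarith [sq_nonneg (s * (1 / 2 - x) - t * x), sq_nonneg (s - t), mul_pos hx0 hy]
    simp only
    linarith

/-- For aligned configurations of three charges on a segment of length `1/2`
(perimeter-1 degenerate triangles), the minimal Coulomb energy with the `i`-th charge
intermediate equals `2(q₁q₂+q₂q₃+q₃q₁) + 4√(q₁q₂q₃)·√(qᵢ)`; hence if `q₂` is the smallest
charge, putting `q₂` in the middle gives the strictly smallest minimal energy. -/
theorem aligned_min_energy_values
    (q1 q2 q3 : ℝ) (hq1 : 0 < q1) (hq2 : 0 < q2) (hq3 : 0 < q3) :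
    IsLeast ((fun x => q1 * q2 / x + q2 * q3 / (1 / 2 - x) + q1 * q3 / (1 / 2)) ''
        Set.Ioo 0 (1 / 2))
      (2 * (q1 * q2 + q2 * q3 + q3 * q1) + 4 * Real.sqrt (q1 * q2 * q3) * Real.sqrt q2) ∧
    IsLeast ((fun x => q2 * q1 / x + q1 * q3 / (1 / 2 - x) + q2 * q3 / (1 / 2)) ''
        Set.Ioo 0 (1 / 2))
      (2 * (q1 * q2 + q2 * q3 + q3 * q1) + 4 * Real.sqrt (q1 * q2 * q3) * Real.sqrt q1) ∧
    IsLeast ((fun x => q1 * q3 / x + q3 * q2 / (1 / 2 - x) + q1 * q2 / (1 / 2)) ''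
        Set.Ioo 0 (1 / 2))
      (2 * (q1 * q2 + q2 * q3 + q3 * q1) + 4 * Real.sqrt (q1 * q2 * q3) * Real.sqrt q3) ∧
    (q2 < q1 → q2 < q3 →
      (2 * (q1 * q2 + q2 * q3 + q3 * q1) + 4 * Real.sqrt (q1 * q2 * q3) * Real.sqrt q2 <
        2 * (q1 * q2 + q2 * q3 + q3 * q1) + 4 * Real.sqrt (q1 * q2 * q3) * Real.sqrt q1) ∧
      (2 * (q1 * q2 + q2 * q3 + q3 * q1) + 4 * Real.sqrt (q1 * q2 * q3) * Real.sqrt q2 <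
        2 * (q1 * q2 + q2 * q3 + q3 * q1) + 4 * Real.sqrt (q1 * q2 * q3) * Real.sqrt q3)) := by
  have sqrt_eq : ∀ u v w : ℝ, 0 ≤ u → 0 ≤ v → 0 ≤ w →
      Real.sqrt (u * v) * Real.sqrt (v * w) = Real.sqrt (u * v * w) * Real.sqrt v := by
    intro u v w hu hv hw
    rw [← Real.sqrt_mul (by positivity), ← Real.sqrt_mul (by positivity)]
    ring_nf
  refine ⟨?_, ?_, ?_, ?_⟩
  · have h := aligned_aux (q1 * q2) (q2 * q3) (q1 * q3 / (1 / 2)) (by positivity) (by positivity)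
    have e : 2 * (q1 * q2) + 2 * (q2 * q3) + 4 * Real.sqrt (q1 * q2) * Real.sqrt (q2 * q3)
        + q1 * q3 / (1 / 2)
        = 2 * (q1 * q2 + q2 * q3 + q3 * q1) + 4 * Real.sqrt (q1 * q2 * q3) * Real.sqrt q2 := by
      rw [mul_assoc, sqrt_eq q1 q2 q3 hq1.le hq2.le hq3.le]; ring
    rwa [e] at h
  · have h := aligned_aux (q2 * q1) (q1 * q3) (q2 * q3 / (1 / 2)) (by positivity) (by positivity)
    have e : 2 * (q2 * q1) + 2 * (q1 * q3) + 4 * Real.sqrt (q2 * q1) * Real.sqrt (q1 * q3)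
        + q2 * q3 / (1 / 2)
        = 2 * (q1 * q2 + q2 * q3 + q3 * q1) + 4 * Real.sqrt (q1 * q2 * q3) * Real.sqrt q1 := by
      rw [mul_assoc, sqrt_eq q2 q1 q3 hq2.le hq1.le hq3.le]
      rw [show q2 * q1 * q3 = q1 * q2 * q3 by ring]; ring
    rwa [e] at h
  · have h := aligned_aux (q1 * q3) (q3 * q2) (q1 * q2 / (1 / 2)) (by positivity) (by positivity)
    have e : 2 * (q1 * q3) + 2 * (q3 * q2) + 4 * Real.sqrt (q1 * q3) * Real.sqrt (q3 * q2)
        + q1 * q2 / (1 / 2)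
        = 2 * (q1 * q2 + q2 * q3 + q3 * q1) + 4 * Real.sqrt (q1 * q2 * q3) * Real.sqrt q3 := by
      rw [mul_assoc, sqrt_eq q1 q3 q2 hq1.le hq3.le hq2.le]
      rw [show q1 * q3 * q2 = q1 * q2 * q3 by ring]; ring
    rwa [e] at h
  · intro h21 h23
    have hpos : 0 < Real.sqrt (q1 * q2 * q3) := Real.sqrt_pos.mpr (by positivity)
    constructor
    · have := Real.sqrt_lt_sqrt hq2.le h21
      nlinarith
    · have := Real.sqrt_lt_sqrt hq2.le h23
      nlinarith
end

section
/- Let r₁, r₂, r₃ > 0 be pairwise distinct and q₁, q₂, q₃ > 0. Define d₁(α) = √(r₂² + r₃² − 2r₂r₃cos α), d₂(α) = √(r₃² + r₁² − 2r₃r₁cos α), d₃(α) = √(r₁² + r₂² − 2r₁r₂cos α), and E(α₁, α₂) = q₂q₃/d₁(α₁) + q₃q₁/d₂(α₂) + q₁q₂/d₃(2π − α₁ − α₂). Then (α₁, α₂) is a critical point of E (both partial derivatives vanish) if and only if, with α₃ = 2π − α₁ − α₂, sin α₁/(q₁ r₁ d₁(α₁)³) = sin α₂/(q₂ r₂ d₂(α₂)³)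 = sin α₃/(q₃ r₃ d₃(α₃)³). -/
/-- Distance between two points on concentric circles of radii `a`, `b` with central
angle `α` (cosine rule). -/
noncomputable def chordDist (a b α : ℝ) : ℝ :=
  Real.sqrt (a ^ 2 + b ^ 2 - 2 * a * b * Real.cos α)

/-- Coulomb energy of three charges on concentric circles of radii `r₁, r₂, r₃`, as a
function of the central angles `(α₁, α₂)` (with `α₃ = 2π − α₁ − α₂`). -/
noncomputable def orbitalEnergy (q1 q2 q3 r1 r2 r3 : ℝ) (p : ℝ × ℝ) : ℝ :=
  q2 * q3 / chordDist r2 r3 p.1 + q3 * q1 / chordDist r3 r1 p.2 +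
    q1 * q2 / chordDist r1 r2 (2 * Real.pi - p.1 - p.2)

lemma chord_inner_pos (a b α : ℝ) (ha : 0 < a) (hb : 0 < b) (hab : a ≠ b) :
    0 < a ^ 2 + b ^ 2 - 2 * a * b * Real.cos α := by
  have hne : a - b ≠ 0 := sub_ne_zero.mpr hab
  have h1 : (a - b) ^ 2 > 0 := by positivity
  nlinarith [Real.cos_le_one α, mul_pos ha hb]

lemma chordDist_pos (a b α : ℝ) (ha : 0 < a) (hb : 0 < b) (hab : a ≠ b) :
    0 < chordDist a b α :=
  Real.sqrt_pos.mpr (chord_inner_pos a b α ha hb hab)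

lemma chordDist_sq (a b α : ℝ) (ha : 0 < a) (hb : 0 < b) (hab : a ≠ b) :
    chordDist a b α ^ 2 = a ^ 2 + b ^ 2 - 2 * a * b * Real.cos α :=
  Real.sq_sqrt (chord_inner_pos a b α ha hb hab).le

lemma hasDerivAt_chordInv (c a b α : ℝ) (ha : 0 < a) (hb : 0 < b) (hab : a ≠ b) :
    HasDerivAt (fun x => c / chordDist a b x)
      (-(c * a * b * Real.sin α) / chordDist a b α ^ 3) α := by
  have hu : HasDerivAt (fun x => a ^ 2 + b ^ 2 - 2 * a * b * Real.cos x)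
      (2 * a * b * Real.sin α) α := by
    have := ((Real.hasDerivAt_cos α).const_mul (2 * a * b)).const_sub (a ^ 2 + b ^ 2)
    refine this.congr_deriv ?_
    ring
  have hupos := chord_inner_pos a b α ha hb hab
  have hs : HasDerivAt (fun x => chordDist a b x)
      (2 * a * b * Real.sin α / (2 * chordDist a b α)) α := hu.sqrt hupos.ne'
  have hd := chordDist_pos a b α ha hb hab
  have := (hasDerivAt_const α c).div hs hd.ne'
  refine this.congr_deriv ?_
  have h2 := chordDist_sq a b α ha hb hab
  field_simp
  ring

/-- `(α₁, α₂)` is a critical point of the orbital Coulomb energy iff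
`sin α₁/(q₁r₁d₁³) = sin α₂/(q₂r₂d₂³) = sin α₃/(q₃r₃d₃³)` with `α₃ = 2π − α₁ − α₂`. -/
theorem orbital_critical_point_characterization
    (r1 r2 r3 q1 q2 q3 : ℝ)
    (hr1 : 0 < r1) (hr2 : 0 < r2) (hr3 : 0 < r3)
    (h12 : r1 ≠ r2) (h23 : r2 ≠ r3) (h31 : r3 ≠ r1)
    (hq1 : 0 < q1) (hq2 : 0 < q2) (hq3 : 0 < q3)
    (α1 α2 : ℝ) :
    fderiv ℝ (orbitalEnergy q1 q2 q3 r1 r2 r3) (α1, α2) = 0 ↔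
      (Real.sin α1 / (q1 * r1 * chordDist r2 r3 α1 ^ 3) =
        Real.sin α2 / (q2 * r2 * chordDist r3 r1 α2 ^ 3) ∧
       Real.sin α2 / (q2 * r2 * chordDist r3 r1 α2 ^ 3) =
        Real.sin (2 * Real.pi - α1 - α2) /
          (q3 * r3 * chordDist r1 r2 (2 * Real.pi - α1 - α2) ^ 3)) := by
  set α3 := 2 * Real.pi - α1 - α2 with hα3
  set d1 := chordDist r2 r3 α1 with hd1def
  set d2 := chordDist r3 r1 α2 with hd2def
  set d3 := chordDist r1 r2 α3 with hd3def
  have hd1 : 0 < d1 := chordDist_pos r2 r3 α1 hr2 hr3 h23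
  have hd2 : 0 < d2 := chordDist_pos r3 r1 α2 hr3 hr1 h31
  have hd3 : 0 < d3 := chordDist_pos r1 r2 α3 hr1 hr2 h12
  set A := -(q2 * q3 * r2 * r3 * Real.sin α1) / d1 ^ 3 with hA
  set B := -(q3 * q1 * r3 * r1 * Real.sin α2) / d2 ^ 3 with hB
  set C := -(q1 * q2 * r1 * r2 * Real.sin α3) / d3 ^ 3 with hC
  set fst := ContinuousLinearMap.fst ℝ ℝ ℝ with hfst
  set snd := ContinuousLinearMap.snd ℝ ℝ ℝ with hsnd
  -- derivative of the inner affine map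
  have hg : HasFDerivAt (fun p : ℝ × ℝ => 2 * Real.pi - p.1 - p.2)
      (-(fst + snd)) (α1, α2) := by
    have heq : (fun p : ℝ × ℝ => 2 * Real.pi - p.1 - p.2)
        = fun p : ℝ × ℝ => 2 * Real.pi - (p.1 + p.2) := by funext p; ring
    rw [heq]
    exact (hasFDerivAt_fst.add hasFDerivAt_snd).const_sub (2 * Real.pi)
  have H1 : HasFDerivAt (fun p : ℝ × ℝ => q2 * q3 / chordDist r2 r3 p.1)
      (A • fst) (α1, α2) :=
    by have := (hasDerivAt_chordInv (q2 * q3) r2 r3 α1 hr2 hr3 h23).comp_hasFDerivAt _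
         (hasFDerivAt_fst (𝕜 := ℝ) (E := ℝ) (F := ℝ) (p := (α1, α2))); exact this
  have H2 : HasFDerivAt (fun p : ℝ × ℝ => q3 * q1 / chordDist r3 r1 p.2)
      (B • snd) (α1, α2) :=
    by have := (hasDerivAt_chordInv (q3 * q1) r3 r1 α2 hr3 hr1 h31).comp_hasFDerivAt _
         (hasFDerivAt_snd (𝕜 := ℝ) (E := ℝ) (F := ℝ) (p := (α1, α2))); exact this
  have H3 : HasFDerivAt
      (fun p : ℝ × ℝ => q1 * q2 / chordDist r1 r2 (2 * Real.pi - p.1 - p.2))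
      (C • -(fst + snd)) (α1, α2) :=
    by have := (hasDerivAt_chordInv (q1 * q2) r1 r2 α3 hr1 hr2 h12).comp_hasFDerivAt (α1, α2) hg
       exact this
  have Htot : HasFDerivAt (orbitalEnergy q1 q2 q3 r1 r2 r3)
      (A • fst + B • snd + C • -(fst + snd)) (α1, α2) := (H1.add H2).add H3
  rw [Htot.fderiv]
  have key : (A • fst + B • snd + C • -(fst + snd)) = 0 ↔ (A = C ∧ B = C) := by
    constructor
    · intro h
      have h1 := congrFun (congrArg DFunLike.coe h) (1, 0)
      have h2 := congrFun (congrArg DFunLike.coe h) (0, 1)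
      simp [hfst, hsnd] at h1 h2
      constructor <;> linarith
    · rintro ⟨ha, hb⟩
      apply ContinuousLinearMap.ext
      intro x
      simp [hfst, hsnd]
      linear_combination x.1 * ha + x.2 * hb
  rw [key]
  have hQ : (-(q1 * q2 * q3 * r1 * r2 * r3) : ℝ) ≠ 0 := by
    have : (0:ℝ) < q1 * q2 * q3 * r1 * r2 * r3 := by positivity
    linarith
  have hAe : A = -(q1 * q2 * q3 * r1 * r2 * r3) *
      (Real.sin α1 / (q1 * r1 * d1 ^ 3)) := by
    rw [hA]; field_simp
  have hBe : B = -(q1 * q2 * q3 * r1 * r2 * r3) *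
      (Real.sin α2 / (q2 * r2 * d2 ^ 3)) := by
    rw [hB]; field_simp
  have hCe : C = -(q1 * q2 * q3 * r1 * r2 * r3) *
      (Real.sin α3 / (q3 * r3 * d3 ^ 3)) := by
    rw [hC]; field_simp
  have e13 : A = C ↔
      Real.sin α1 / (q1 * r1 * d1 ^ 3) = Real.sin α3 / (q3 * r3 * d3 ^ 3) := by
    rw [hAe, hCe, mul_right_inj' hQ]
  have e23 : B = C ↔
      Real.sin α2 / (q2 * r2 * d2 ^ 3) = Real.sin α3 / (q3 * r3 * d3 ^ 3) := by
    rw [hBe, hCe, mul_right_inj' hQ]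
  rw [e13, e23]
  constructor
  · rintro ⟨h1, h2⟩
    exact ⟨h1.trans h2.symm, h2⟩
  · rintro ⟨h1, h2⟩
    exact ⟨h1.trans h2, h2⟩
end

section
/- Let r₁, r₂, r₃ > 0 with r₁ ≠ r₂, and q₁, q₂, q₃ > 0. Consider the aligned configuration (α₁, α₂) = (π, π) (so α₃ = 0) of the orbitally constrained triple, with distances d₁ = r₂ + r₃, d₂ = r₃ + r₁, d₃ = |r₁ − r₂|. Set A₁ = r₁/(d₂³d₃³), A₂ = r₂/(d₃³d₁³), A₃ = r₃/(d₁³d₂³). Then the determinant of the Hessian of E at (π, π) equals q₁q₂q₃·r₁r₂r₃·(A₃q₃ − A₁q₁ − A₂q₂). Moreover, if A₃q₃ > A₁q₁ + A₂q₂ then (π, π) is a nondegenerate local minimum of E, and if A₃q₃ < A₁q₁ + A₂q₂ then (π, π) is a nondegenerate saddle point (neither a local minimum nor a local maximum). -/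
set_option maxHeartbeats 4000000

/-! ### auxiliary 1-D calculus -/

noncomputable def uu (a b α : ℝ) : ℝ := a ^ 2 + b ^ 2 - 2 * a * b * Real.cos α

noncomputable def DD1 (q a b α : ℝ) : ℝ :=
  -(q * a * b * Real.sin α) / (Real.sqrt (uu a b α) * uu a b α)

noncomputable def DD2 (q a b α : ℝ) : ℝ :=
  -(q * a * b * Real.cos α) / (Real.sqrt (uu a b α) * uu a b α) +
    3 * q * (a * b * Real.sin α) ^ 2 / (Real.sqrt (uu a b α) * (uu a b α) ^ 2)

lemma hasDerivAt_uu (a b α : ℝ) : HasDerivAt (uu a b) (2 * a * b * Real.sin α) α := by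
  have h : HasDerivAt (fun t => a ^ 2 + b ^ 2 - 2 * a * b * Real.cos t)
      (-(2 * a * b * -Real.sin α)) α := ((Real.hasDerivAt_cos α).const_mul (2*a*b)).const_sub _
  exact h.congr_deriv (by ring)

lemma sqrt_uu_pos {a b α : ℝ} (hu : 0 < uu a b α) : 0 < Real.sqrt (uu a b α) :=
  Real.sqrt_pos.mpr hu

lemma hasDerivAt_sqrt_uu {a b α : ℝ} (hu : 0 < uu a b α) :
    HasDerivAt (fun t => Real.sqrt (uu a b t)) (a * b * Real.sin α / Real.sqrt (uu a b α)) α := by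
  have h := (Real.hasDerivAt_sqrt (ne_of_gt hu)).comp α (hasDerivAt_uu a b α)
  refine h.congr_deriv ?_
  field_simp

lemma hasDerivAt_quot {q a b α : ℝ} (hu : 0 < uu a b α) :
    HasDerivAt (fun t => q / chordDist a b t) (DD1 q a b α) α := by
  have hs := sqrt_uu_pos hu
  have h := (hasDerivAt_const α q).div (hasDerivAt_sqrt_uu hu) (ne_of_gt hs)
  have hc : (fun t => q / chordDist a b t) = fun t => q / Real.sqrt (uu a b t) := rfl
  rw [hc]
  refine h.congr_deriv ?_
  rw [DD1]
  rw [Real.sq_sqrt hu.le]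
  field_simp
  ring

lemma hasDerivAt_DD1 {a b α : ℝ} (q : ℝ) (hu : 0 < uu a b α) :
    HasDerivAt (DD1 q a b) (DD2 q a b α) α := by
  have hs := sqrt_uu_pos hu
  have hnum : HasDerivAt (fun t => -(q * a * b * Real.sin t)) (-(q * a * b * Real.cos α)) α := by
    have := ((Real.hasDerivAt_sin α).const_mul (q * a * b)).neg
    exact this
  have hden : HasDerivAt (fun t => Real.sqrt (uu a b t) * uu a b t)
      (a * b * Real.sin α / Real.sqrt (uu a b α) * uu a b α +
        Real.sqrt (uu a b α) * (2 * a * b * Real.sin α)) α :=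
    (hasDerivAt_sqrt_uu hu).mul (hasDerivAt_uu a b α)
  have h := hnum.div hden (by positivity)
  have hDD1 : DD1 q a b = fun t => -(q * a * b * Real.sin t) / (Real.sqrt (uu a b t) * uu a b t) := rfl
  rw [hDD1]
  refine h.congr_deriv ?_
  rw [DD2]
  have hsq : Real.sqrt (uu a b α) ^ 2 = uu a b α := Real.sq_sqrt hu.le
  set s := Real.sqrt (uu a b α)
  rw [← hsq]
  field_simp
  ring

lemma uu_pi {a b : ℝ} : uu a b Real.pi = (a + b) ^ 2 := by
  simp [uu, Real.cos_pi]; ring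

lemma uu_two_pi {a b : ℝ} : uu a b (2 * Real.pi) = (a - b) ^ 2 := by
  simp [uu, Real.cos_two_pi]; ring

lemma DD1_pi (q a b : ℝ) : DD1 q a b Real.pi = 0 := by
  simp [DD1, Real.sin_pi]

lemma DD1_two_pi (q a b : ℝ) : DD1 q a b (2 * Real.pi) = 0 := by
  simp [DD1, Real.sin_two_pi]

lemma DD2_pi {a b : ℝ} (q : ℝ) (ha : 0 < a) (hb : 0 < b) :
    DD2 q a b Real.pi = q * a * b / (a + b) ^ 3 := by
  have hab : (0:ℝ) < a + b := by linarith
  rw [DD2, uu_pi, Real.sqrt_sq hab.le, Real.sin_pi, Real.cos_pi]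
  rw [mul_zero, zero_pow (by norm_num), mul_zero, zero_div, add_zero]
  rw [show (a+b) * (a+b)^2 = (a+b)^3 by ring]
  ring_nf

lemma DD2_two_pi {a b : ℝ} (q : ℝ) (hab : a ≠ b) :
    DD2 q a b (2 * Real.pi) = -(q * a * b) / |a - b| ^ 3 := by
  have h : (a - b) ^ 2 = |a - b| ^ 2 := (sq_abs _).symm
  rw [DD2, uu_two_pi, h, Real.sqrt_sq (abs_nonneg _), Real.sin_two_pi, Real.cos_two_pi]
  rw [mul_zero, zero_pow (by norm_num), mul_zero, zero_div, add_zero]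
  rw [show |a-b| * |a-b|^2 = |a-b|^3 by ring]
  ring_nf

lemma uu_pos {a b : ℝ} (ha : 0 < a) (hb : 0 < b) (hab : a ≠ b) (α : ℝ) :
    0 < uu a b α := by
  have h1 := Real.cos_le_one α
  have hne : a - b ≠ 0 := sub_ne_zero.mpr hab
  have h2 : (a - b) ^ 2 > 0 := by positivity
  have h3 : 0 < a * b := by positivity
  show 0 < a ^ 2 + b ^ 2 - 2 * a * b * Real.cos α
  nlinarith [mul_le_mul_of_nonneg_left h1 h3.le]

lemma uu_continuous (a b : ℝ) : Continuous (uu a b) := by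
  unfold uu; continuity

lemma continuousAt_DD2 {a b α : ℝ} (q : ℝ) (hu : 0 < uu a b α) :
    ContinuousAt (DD2 q a b) α := by
  have hs : Real.sqrt (uu a b α) * uu a b α ≠ 0 := by
    have := Real.sqrt_pos.mpr hu; positivity
  have hs2 : Real.sqrt (uu a b α) * (uu a b α) ^ 2 ≠ 0 := by
    have := Real.sqrt_pos.mpr hu; positivity
  have hcu : ContinuousAt (uu a b) α := (uu_continuous a b).continuousAt
  have hcs : ContinuousAt (fun t => Real.sqrt (uu a b t)) α :=
    Real.continuous_sqrt.continuousAt.comp hcu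
  apply ContinuousAt.add
  · exact (((Real.continuous_cos.continuousAt.const_mul _).neg).div (hcs.mul hcu) hs)
  · exact ((continuousAt_const.mul ((Real.continuous_sin.continuousAt.const_mul _).pow 2)).div
      (hcs.mul (hcu.pow 2)) hs2)

/-- Key 1-D lemma: strict local lower bound from second derivative bound. -/
lemma key1 {f f' f'' : ℝ → ℝ} {x₀ δ m : ℝ}
    (hd1 : ∀ x ∈ Set.Ioo (x₀ - δ) (x₀ + δ), HasDerivAt f (f' x) x)
    (hd2 : ∀ x ∈ Set.Ioo (x₀ - δ) (x₀ + δ), HasDerivAt f' (f'' x) x)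
    (h0 : f' x₀ = 0)
    (hm : ∀ x ∈ Set.Ioo (x₀ - δ) (x₀ + δ), m < f'' x) :
    ∀ x ∈ Set.Ioo (x₀ - δ) (x₀ + δ), x ≠ x₀ → f x₀ + m / 2 * (x - x₀) ^ 2 < f x := by
  set I := Set.Ioo (x₀ - δ) (x₀ + δ) with hI
  intro x hx hne
  have hx₀ : x₀ ∈ I := by
    constructor <;> [skip; skip] <;>
      · rcases hx with ⟨h1, h2⟩; by_contra h; push_neg at h; simp only [hI] at *; linarith
  set g : ℝ → ℝ := fun y => f y - m / 2 * (y - x₀) ^ 2 with hg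
  set g' : ℝ → ℝ := fun y => f' y - m * (y - x₀) with hg'
  have hgd : ∀ y ∈ I, HasDerivAt g (g' y) y := by
    intro y hy
    have hp : HasDerivAt (fun z => m / 2 * (z - x₀) ^ 2) (m * (y - x₀)) y := by
      have := (((hasDerivAt_id y).sub_const x₀).pow 2).const_mul (m / 2)
      refine this.congr_deriv ?_; simp only [id]; ring
    exact (hd1 y hy).sub hp
  have hgd2 : ∀ y ∈ I, HasDerivAt g' (f'' y - m) y := by
    intro y hy
    have := (hd2 y hy).sub (((hasDerivAt_id y).sub_const x₀).const_mul m)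
    simp only [mul_one] at this
    exact this
  have hmono : StrictMonoOn g' I := by
    apply strictMonoOn_of_deriv_pos (convex_Ioo _ _)
    · exact fun y hy => (hgd2 y hy).continuousAt.continuousWithinAt
    · intro y hy
      rw [interior_Ioo] at hy
      rw [(hgd2 y hy).deriv]
      have := hm y hy
      linarith
  have hg'x₀ : g' x₀ = 0 := by simp [hg', h0]
  rcases hne.lt_or_gt with hlt | hlt
  · have hsub : Set.Icc x x₀ ⊆ I := by
      intro y hy
      exact ⟨by rcases hx with ⟨a1, a2⟩; rcases hy with ⟨b1, b2⟩; linarith,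
             by rcases hx₀ with ⟨a1, a2⟩; rcases hy with ⟨b1, b2⟩; linarith⟩
    have hanti : StrictAntiOn g (Set.Icc x x₀) := by
      apply strictAntiOn_of_deriv_neg (convex_Icc _ _)
      · exact fun y hy => (hgd y (hsub hy)).continuousAt.continuousWithinAt
      · intro y hy
        rw [interior_Icc] at hy
        have hyI : y ∈ I := hsub (Set.Ioo_subset_Icc_self hy)
        rw [(hgd y hyI).deriv]
        have := hmono hyI hx₀ hy.2
        rw [hg'x₀] at this
        linarith
    have := hanti (Set.left_mem_Icc.mpr hlt.le) (Set.right_mem_Icc.mpr hlt.le) hlt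
    simp only [hg] at this
    nlinarith [this]
  · have hsub : Set.Icc x₀ x ⊆ I := by
      intro y hy
      exact ⟨by rcases hx₀ with ⟨a1, a2⟩; rcases hy with ⟨b1, b2⟩; linarith,
             by rcases hx with ⟨a1, a2⟩; rcases hy with ⟨b1, b2⟩; linarith⟩
    have hmono2 : StrictMonoOn g (Set.Icc x₀ x) := by
      apply strictMonoOn_of_deriv_pos (convex_Icc _ _)
      · exact fun y hy => (hgd y (hsub hy)).continuousAt.continuousWithinAt
      · intro y hy
        rw [interior_Icc] at hy
        have hyI : y ∈ I := hsub (Set.Ioo_subset_Icc_self hy)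
        rw [(hgd y hyI).deriv]
        have := hmono hx₀ hyI hy.1
        rw [hg'x₀] at this
        linarith
    have := hmono2 (Set.left_mem_Icc.mpr hlt.le) (Set.right_mem_Icc.mpr hlt.le) hlt
    simp only [hg] at this
    nlinarith [this]

/-! ### multivariate machinery -/

noncomputable def LL1 : (ℝ × ℝ) →L[ℝ] ℝ := ContinuousLinearMap.fst ℝ ℝ ℝ
noncomputable def LL2 : (ℝ × ℝ) →L[ℝ] ℝ := ContinuousLinearMap.snd ℝ ℝ ℝ
noncomputable def LL3 : (ℝ × ℝ) →L[ℝ] ℝ := LL1 + LL2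

lemma E_decomp (q1 q2 q3 r1 r2 r3 : ℝ) (p : ℝ × ℝ) :
    orbitalEnergy q1 q2 q3 r1 r2 r3 p =
      q2 * q3 / chordDist r2 r3 p.1 + q3 * q1 / chordDist r3 r1 p.2 +
        q1 * q2 / chordDist r1 r2 (p.1 + p.2) := by
  unfold orbitalEnergy chordDist
  rw [show 2 * Real.pi - p.1 - p.2 = 2 * Real.pi - (p.1 + p.2) by ring,
    Real.cos_sub, Real.cos_two_pi, Real.sin_two_pi]
  ring_nf

lemma energy_hasFDerivAt (q1 q2 q3 r1 r2 r3 : ℝ) (p : ℝ × ℝ)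
    (h1 : 0 < uu r2 r3 p.1) (h2 : 0 < uu r3 r1 p.2) (h3 : 0 < uu r1 r2 (p.1 + p.2)) :
    HasFDerivAt (orbitalEnergy q1 q2 q3 r1 r2 r3)
      (DD1 (q2 * q3) r2 r3 p.1 • LL1 + DD1 (q3 * q1) r3 r1 p.2 • LL2 +
        DD1 (q1 * q2) r1 r2 (p.1 + p.2) • LL3) p := by
  have e1 : HasFDerivAt (fun p : ℝ × ℝ => q2 * q3 / chordDist r2 r3 p.1)
      (DD1 (q2 * q3) r2 r3 p.1 • LL1) p :=
    (hasDerivAt_quot h1).comp_hasFDerivAt p LL1.hasFDerivAt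
  have e2 : HasFDerivAt (fun p : ℝ × ℝ => q3 * q1 / chordDist r3 r1 p.2)
      (DD1 (q3 * q1) r3 r1 p.2 • LL2) p :=
    (hasDerivAt_quot h2).comp_hasFDerivAt p LL2.hasFDerivAt
  have e3 : HasFDerivAt (fun p : ℝ × ℝ => q1 * q2 / chordDist r1 r2 (p.1 + p.2))
      (DD1 (q1 * q2) r1 r2 (p.1 + p.2) • LL3) p :=
    (hasDerivAt_quot (q := q1 * q2) (α := LL3 p) h3).comp_hasFDerivAt p LL3.hasFDerivAt
  exact ((e1.add e2).add e3).congr_of_eventuallyEq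
    (Filter.Eventually.of_forall fun q => (E_decomp q1 q2 q3 r1 r2 r3 q))

noncomputable def Phi (q1 q2 q3 r1 r2 r3 : ℝ) (p : ℝ × ℝ) : (ℝ × ℝ) →L[ℝ] ℝ :=
  DD1 (q2 * q3) r2 r3 p.1 • LL1 + DD1 (q3 * q1) r3 r1 p.2 • LL2 +
    DD1 (q1 * q2) r1 r2 (p.1 + p.2) • LL3

lemma Phi_hasFDerivAt (q1 q2 q3 r1 r2 r3 : ℝ) (p : ℝ × ℝ)
    (h1 : 0 < uu r2 r3 p.1) (h2 : 0 < uu r3 r1 p.2) (h3 : 0 < uu r1 r2 (p.1 + p.2)) :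
    HasFDerivAt (Phi q1 q2 q3 r1 r2 r3)
      ((DD2 (q2 * q3) r2 r3 p.1 • LL1).smulRight LL1 +
        (DD2 (q3 * q1) r3 r1 p.2 • LL2).smulRight LL2 +
        (DD2 (q1 * q2) r1 r2 (p.1 + p.2) • LL3).smulRight LL3) p := by
  have c1 : HasFDerivAt (fun p : ℝ × ℝ => DD1 (q2 * q3) r2 r3 p.1)
      (DD2 (q2 * q3) r2 r3 p.1 • LL1) p :=
    (hasDerivAt_DD1 _ h1).comp_hasFDerivAt p LL1.hasFDerivAt
  have c2 : HasFDerivAt (fun p : ℝ × ℝ => DD1 (q3 * q1) r3 r1 p.2)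
      (DD2 (q3 * q1) r3 r1 p.2 • LL2) p :=
    (hasDerivAt_DD1 _ h2).comp_hasFDerivAt p LL2.hasFDerivAt
  have c3 : HasFDerivAt (fun p : ℝ × ℝ => DD1 (q1 * q2) r1 r2 (p.1 + p.2))
      (DD2 (q1 * q2) r1 r2 (p.1 + p.2) • LL3) p :=
    (hasDerivAt_DD1 (a := r1) (b := r2) (α := LL3 p) _ h3).comp_hasFDerivAt p LL3.hasFDerivAt
  exact ((c1.smul_const LL1).add (c2.smul_const LL2)).add (c3.smul_const LL3)

lemma B_eq (q1 q2 q3 r1 r2 r3 : ℝ)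
    (hr1 : 0 < r1) (hr2 : 0 < r2) (hr3 : 0 < r3) (h12 : r1 ≠ r2) :
    fderiv ℝ (fderiv ℝ (orbitalEnergy q1 q2 q3 r1 r2 r3)) (Real.pi, Real.pi) =
      (DD2 (q2 * q3) r2 r3 Real.pi • LL1).smulRight LL1 +
        (DD2 (q3 * q1) r3 r1 Real.pi • LL2).smulRight LL2 +
        (DD2 (q1 * q2) r1 r2 (Real.pi + Real.pi) • LL3).smulRight LL3 := by
  have hu1 : 0 < uu r2 r3 Real.pi := by rw [uu_pi]; positivity
  have hu2 : 0 < uu r3 r1 Real.pi := by rw [uu_pi]; positivity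
  have hu3 : ∀ s, 0 < uu r1 r2 s := uu_pos hr1 hr2 h12
  have hev : ∀ᶠ p : ℝ × ℝ in nhds (Real.pi, Real.pi),
      0 < uu r2 r3 p.1 ∧ 0 < uu r3 r1 p.2 := by
    have c1 : ContinuousAt (fun p : ℝ × ℝ => uu r2 r3 p.1) (Real.pi, Real.pi) :=
      ((uu_continuous r2 r3).comp continuous_fst).continuousAt
    have c2 : ContinuousAt (fun p : ℝ × ℝ => uu r3 r1 p.2) (Real.pi, Real.pi) :=
      ((uu_continuous r3 r1).comp continuous_snd).continuousAt
    exact (c1.eventually_mem (eventually_gt_nhds hu1) |>.and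
      (c2.eventually_mem (eventually_gt_nhds hu2)))
  have heq : fderiv ℝ (orbitalEnergy q1 q2 q3 r1 r2 r3) =ᶠ[nhds (Real.pi, Real.pi)]
      Phi q1 q2 q3 r1 r2 r3 :=
    hev.mono fun p hp => (energy_hasFDerivAt q1 q2 q3 r1 r2 r3 p hp.1 hp.2 (hu3 _)).fderiv
  rw [heq.fderiv_eq]
  exact (Phi_hasFDerivAt q1 q2 q3 r1 r2 r3 (Real.pi, Real.pi) hu1 hu2 (hu3 _)).fderiv

lemma extract1 {x0 : ℝ} {P : ℝ → Prop} (h : ∀ᶠ x in nhds x0, P x) :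
    ∃ δ > 0, ∀ x : ℝ, |x - x0| < δ → P x := by
  rw [Metric.eventually_nhds_iff] at h
  obtain ⟨δ, hδ, h⟩ := h
  exact ⟨δ, hδ, fun x hx => h (by simpa [Real.dist_eq] using hx)⟩

lemma quadform_nonneg {A B C X Y : ℝ} (hF : 0 < A * B - (A + B) * C)
    (hA : 0 < A) (hB : 0 < B) :
    0 ≤ A/2 * X^2 + B/2 * Y^2 + (-C)/2 * (X + Y)^2 := by
  nlinarith [sq_nonneg (A*X - B*Y), sq_nonneg (X+Y), hF, hA, hB,
    mul_nonneg (sq_nonneg (X+Y)) hF.le]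

lemma psi_neg {va vb vc : ℝ} (h : va * vb < va * vc + vb * vc)
    (hva : 0 < va) (hvb : 0 < vb) :
    va * vb^2 + vb * va^2 - vc * (va + vb)^2 < 0 := by
  nlinarith [mul_lt_mul_of_pos_left (show va * vb - (va * vc + vb * vc) < 0 by linarith)
    (add_pos hva hvb)]

lemma mem_Ioo_of_abs {x x0 δ : ℝ} (h : |x - x0| < δ) : x ∈ Set.Ioo (x0 - δ) (x0 + δ) := by
  rcases abs_sub_lt_iff.mp h with ⟨h1, h2⟩
  exact ⟨by linarith, by linarith⟩

lemma abs_of_mem_Ioo {x x0 δ : ℝ} (h : x ∈ Set.Ioo (x0 - δ) (x0 + δ)) : |x - x0| < δ := by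
  rcases h with ⟨h1, h2⟩
  exact abs_sub_lt_iff.mpr ⟨by linarith, by linarith⟩

/-- At the aligned configuration `(α₁, α₂) = (π, π)` (so `α₃ = 0`), with
`d₁ = r₂+r₃`, `d₂ = r₃+r₁`, `d₃ = |r₁−r₂|` and `A₁ = r₁/(d₂³d₃³)`, `A₂ = r₂/(d₃³d₁³)`,
`A₃ = r₃/(d₁³d₂³)`, the Hessian determinant equals
`q₁q₂q₃·r₁r₂r₃·(A₃q₃ − A₁q₁ − A₂q₂)`; if `A₃q₃ > A₁q₁ + A₂q₂` the point is a
nondegenerate local minimum, and if `A₃q₃ < A₁q₁ + A₂q₂` it is a nondegenerate saddle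
(neither a local minimum nor a local maximum). -/
theorem orbital_pitchfork_at_pi_pi
    (r1 r2 r3 q1 q2 q3 : ℝ)
    (hr1 : 0 < r1) (hr2 : 0 < r2) (hr3 : 0 < r3) (h12 : r1 ≠ r2)
    (hq1 : 0 < q1) (hq2 : 0 < q2) (hq3 : 0 < q3)
    (d1 d2 d3 A1 A2 A3 : ℝ)
    (hd1 : d1 = r2 + r3) (hd2 : d2 = r3 + r1) (hd3 : d3 = |r1 - r2|)
    (hA1 : A1 = r1 / (d2 ^ 3 * d3 ^ 3)) (hA2 : A2 = r2 / (d3 ^ 3 * d1 ^ 3))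
    (hA3 : A3 = r3 / (d1 ^ 3 * d2 ^ 3))
    (B : (ℝ × ℝ) →L[ℝ] (ℝ × ℝ) →L[ℝ] ℝ)
    (hB : B = fderiv ℝ (fderiv ℝ (orbitalEnergy q1 q2 q3 r1 r2 r3))
        (Real.pi, Real.pi)) :
    (B (1, 0) (1, 0) * B (0, 1) (0, 1) - B (1, 0) (0, 1) * B (0, 1) (1, 0) =
      q1 * q2 * q3 * (r1 * r2 * r3) * (A3 * q3 - A1 * q1 - A2 * q2)) ∧
    (A1 * q1 + A2 * q2 < A3 * q3 →
      IsLocalMin (orbitalEnergy q1 q2 q3 r1 r2 r3) (Real.pi, Real.pi) ∧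
      B (1, 0) (1, 0) * B (0, 1) (0, 1) - B (1, 0) (0, 1) * B (0, 1) (1, 0) ≠ 0) ∧
    (A3 * q3 < A1 * q1 + A2 * q2 →
      ¬ IsLocalMin (orbitalEnergy q1 q2 q3 r1 r2 r3) (Real.pi, Real.pi) ∧
      ¬ IsLocalMax (orbitalEnergy q1 q2 q3 r1 r2 r3) (Real.pi, Real.pi) ∧
      B (1, 0) (1, 0) * B (0, 1) (0, 1) - B (1, 0) (0, 1) * B (0, 1) (1, 0) ≠ 0) := by
  have hd1p : 0 < d1 := by rw [hd1]; positivity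
  have hd2p : 0 < d2 := by rw [hd2]; positivity
  have hd3p : 0 < d3 := by rw [hd3]; exact abs_pos.mpr (sub_ne_zero.mpr h12)
  obtain ⟨va, hva⟩ : ∃ x : ℝ, x = q2 * q3 * r2 * r3 / d1 ^ 3 := ⟨_, rfl⟩
  obtain ⟨vb, hvb⟩ : ∃ x : ℝ, x = q3 * q1 * r3 * r1 / d2 ^ 3 := ⟨_, rfl⟩
  obtain ⟨vc, hvc⟩ : ∃ x : ℝ, x = q1 * q2 * r1 * r2 / d3 ^ 3 := ⟨_, rfl⟩
  have hvap : 0 < va := by rw [hva]; positivity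
  have hvbp : 0 < vb := by rw [hvb]; positivity
  have hvcp : 0 < vc := by rw [hvc]; positivity
  have haa : DD2 (q2 * q3) r2 r3 Real.pi = va := by
    rw [DD2_pi _ hr2 hr3, hva, hd1]; try ring
  have hbb : DD2 (q3 * q1) r3 r1 Real.pi = vb := by
    rw [DD2_pi _ hr3 hr1, hvb, hd2]; try ring
  have hcc : DD2 (q1 * q2) r1 r2 (Real.pi + Real.pi) = -vc := by
    rw [show Real.pi + Real.pi = 2 * Real.pi by ring, DD2_two_pi _ h12, hvc, hd3]; ring
  have hBval : ∀ v w : ℝ × ℝ, B v w = va * v.1 * w.1 + vb * v.2 * w.2 +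
      (-vc) * (v.1 + v.2) * (w.1 + w.2) := by
    intro v w
    rw [hB, B_eq q1 q2 q3 r1 r2 r3 hr1 hr2 hr3 h12]
    simp [LL3, LL1, LL2, ContinuousLinearMap.smulRight_apply, ContinuousLinearMap.add_apply,
      ContinuousLinearMap.smul_apply, smul_eq_mul, haa, hbb, hcc]
    ring
  have e11 : B (1, 0) (1, 0) = va - vc := by rw [hBval]; norm_num [sub_eq_add_neg]
  have e22 : B (0, 1) (0, 1) = vb - vc := by rw [hBval]; norm_num [sub_eq_add_neg]
  have e12 : B (1, 0) (0, 1) = -vc := by rw [hBval]; norm_num [sub_eq_add_neg]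
  have e21 : B (0, 1) (1, 0) = -vc := by rw [hBval]; norm_num [sub_eq_add_neg]
  have hdetK : B (1, 0) (1, 0) * B (0, 1) (0, 1) - B (1, 0) (0, 1) * B (0, 1) (1, 0) =
      q1 * q2 * q3 * (r1 * r2 * r3) * (A3 * q3 - A1 * q1 - A2 * q2) := by
    rw [e11, e22, e12, e21, hA1, hA2, hA3, hva, hvb, hvc]
    field_simp
    ring
  refine ⟨hdetK, ?_, ?_⟩
  · intro hlt
    have hKpos : 0 < q1 * q2 * q3 * (r1 * r2 * r3) := by positivity
    have hid : va * vb - va * vc - vb * vc =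
        q1 * q2 * q3 * (r1 * r2 * r3) * (A3 * q3 - A1 * q1 - A2 * q2) := by
      rw [hA1, hA2, hA3, hva, hvb, hvc]; field_simp; ring
    have hSpos : 0 < A3 * q3 - A1 * q1 - A2 * q2 := by linarith
    have hkey : va * vc + vb * vc < va * vb := by linarith [hid, mul_pos hKpos hSpos]
    constructor
    · -- IsLocalMin
      clear hid hdetK hBval e11 e22 e12 e21 hB hlt hSpos hA1 hA2 hA3
      have hF0 : (0:ℝ) < (va - 2*0) * (vb - 2*0) - ((va - 2*0) + (vb - 2*0)) * (vc + 2*0) := by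
        norm_num; nlinarith [hkey]
      have hεev : ∀ᶠ ε : ℝ in nhds 0,
          (0 < (va - 2*ε) * (vb - 2*ε) - ((va - 2*ε) + (vb - 2*ε)) * (vc + 2*ε)) ∧
          0 < va - 2*ε ∧ 0 < vb - 2*ε := by
        have hFc : ContinuousAt (fun ε : ℝ =>
            (va - 2*ε) * (vb - 2*ε) - ((va - 2*ε) + (vb - 2*ε)) * (vc + 2*ε)) 0 := by fun_prop
        have h1c : ContinuousAt (fun ε : ℝ => va - 2*ε) 0 := by fun_prop
        have h2c : ContinuousAt (fun ε : ℝ => vb - 2*ε) 0 := by fun_prop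
        have e1 := hFc.eventually_mem (eventually_gt_nhds hF0)
        have e2 := h1c.eventually_mem (eventually_gt_nhds (show (0:ℝ) < va - 2*0 by norm_num; linarith))
        have e3 := h2c.eventually_mem (eventually_gt_nhds (show (0:ℝ) < vb - 2*0 by norm_num; linarith))
        exact (e1.and (e2.and e3)).mono fun ε h => ⟨h.1, h.2.1, h.2.2⟩
      obtain ⟨ε, hεpos, hFε, hAε, hBε⟩ := hεev.exists_gt
      have hu1π : 0 < uu r2 r3 Real.pi := by rw [uu_pi]; positivity
      have hu2π : 0 < uu r3 r1 Real.pi := by rw [uu_pi]; positivity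
      have hu3g : ∀ s, 0 < uu r1 r2 s := uu_pos hr1 hr2 h12
      have hcc2 : DD2 (q1 * q2) r1 r2 (2 * Real.pi) = -vc := by
        rw [DD2_two_pi _ h12, hvc, hd3]; try ring
      obtain ⟨δ1, hδ1, hP1⟩ := extract1 (x0 := Real.pi)
        ((((uu_continuous r2 r3).continuousAt.eventually_mem (eventually_gt_nhds hu1π))).and
          ((continuousAt_DD2 (q2*q3) hu1π).eventually_mem (eventually_gt_nhds
            (show va - 2*ε < DD2 (q2*q3) r2 r3 Real.pi by rw [haa]; linarith))))
      obtain ⟨δ2, hδ2, hP2⟩ := extract1 (x0 := Real.pi)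
        ((((uu_continuous r3 r1).continuousAt.eventually_mem (eventually_gt_nhds hu2π))).and
          ((continuousAt_DD2 (q3*q1) hu2π).eventually_mem (eventually_gt_nhds
            (show vb - 2*ε < DD2 (q3*q1) r3 r1 Real.pi by rw [hbb]; linarith))))
      obtain ⟨δ3, hδ3, hP3⟩ := extract1 (x0 := 2*Real.pi)
        ((continuousAt_DD2 (q1*q2) (hu3g (2*Real.pi))).eventually_mem (eventually_gt_nhds
          (show -(vc + 2*ε) < DD2 (q1*q2) r1 r2 (2*Real.pi) by rw [hcc2]; linarith)))
      have bnd1 : ∀ x : ℝ, |x - Real.pi| < δ1 →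
          q2*q3 / chordDist r2 r3 Real.pi + (va - 2*ε)/2 * (x - Real.pi)^2 ≤
            q2*q3 / chordDist r2 r3 x := by
        intro x hx
        rcases eq_or_ne x Real.pi with rfl | hne
        · simp
        · exact (key1 (f' := DD1 (q2*q3) r2 r3) (f'' := DD2 (q2*q3) r2 r3)
            (fun y hy => hasDerivAt_quot (hP1 y (abs_of_mem_Ioo hy)).1)
            (fun y hy => hasDerivAt_DD1 _ (hP1 y (abs_of_mem_Ioo hy)).1)
            (DD1_pi _ _ _)
            (fun y hy => (hP1 y (abs_of_mem_Ioo hy)).2)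
            x (mem_Ioo_of_abs hx) hne).le
      have bnd2 : ∀ x : ℝ, |x - Real.pi| < δ2 →
          q3*q1 / chordDist r3 r1 Real.pi + (vb - 2*ε)/2 * (x - Real.pi)^2 ≤
            q3*q1 / chordDist r3 r1 x := by
        intro x hx
        rcases eq_or_ne x Real.pi with rfl | hne
        · simp
        · exact (key1 (f' := DD1 (q3*q1) r3 r1) (f'' := DD2 (q3*q1) r3 r1)
            (fun y hy => hasDerivAt_quot (hP2 y (abs_of_mem_Ioo hy)).1)
            (fun y hy => hasDerivAt_DD1 _ (hP2 y (abs_of_mem_Ioo hy)).1)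
            (DD1_pi _ _ _)
            (fun y hy => (hP2 y (abs_of_mem_Ioo hy)).2)
            x (mem_Ioo_of_abs hx) hne).le
      have bnd3 : ∀ x : ℝ, |x - 2*Real.pi| < δ3 →
          q1*q2 / chordDist r1 r2 (2*Real.pi) + (-(vc + 2*ε))/2 * (x - 2*Real.pi)^2 ≤
            q1*q2 / chordDist r1 r2 x := by
        intro x hx
        rcases eq_or_ne x (2*Real.pi) with rfl | hne
        · simp
        · exact (key1 (f' := DD1 (q1*q2) r1 r2) (f'' := DD2 (q1*q2) r1 r2)
            (fun y _ => hasDerivAt_quot (hu3g y))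
            (fun y _ => hasDerivAt_DD1 _ (hu3g y))
            (DD1_two_pi _ _ _)
            (fun y hy => hP3 y (abs_of_mem_Ioo hy))
            x (mem_Ioo_of_abs hx) hne).le
      have hmin : ∀ᶠ p : ℝ × ℝ in nhds (Real.pi, Real.pi),
          orbitalEnergy q1 q2 q3 r1 r2 r3 (Real.pi, Real.pi) ≤
            orbitalEnergy q1 q2 q3 r1 r2 r3 p := by
        rw [Metric.eventually_nhds_iff]
        refine ⟨min δ1 (min δ2 (δ3/2)), by positivity, fun p hp => ?_⟩
        rw [Prod.dist_eq] at hp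
        obtain ⟨hpx, hpy⟩ := max_lt_iff.mp hp
        rw [Real.dist_eq] at hpx hpy
        have hx1 : |p.1 - Real.pi| < δ1 := lt_of_lt_of_le hpx (min_le_left _ _)
        have hy2 : |p.2 - Real.pi| < δ2 :=
          lt_of_lt_of_le hpy ((min_le_right _ _).trans (min_le_left _ _))
        have hx3 : |p.1 - Real.pi| < δ3/2 :=
          lt_of_lt_of_le hpx ((min_le_right _ _).trans (min_le_right _ _))
        have hy3 : |p.2 - Real.pi| < δ3/2 :=
          lt_of_lt_of_le hpy ((min_le_right _ _).trans (min_le_right _ _))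
        have hs3 : |p.1 + p.2 - 2*Real.pi| < δ3 := by
          have h := abs_add_le (p.1 - Real.pi) (p.2 - Real.pi)
          rw [show p.1 - Real.pi + (p.2 - Real.pi) = p.1 + p.2 - 2*Real.pi by ring] at h
          linarith
        have b1 := bnd1 p.1 hx1
        have b2 := bnd2 p.2 hy2
        have b3 := bnd3 (p.1 + p.2) hs3
        rw [E_decomp, E_decomp]
        rw [show Real.pi + Real.pi = 2*Real.pi by ring]
        have hq : 0 ≤ (va - 2*ε)/2 * (p.1 - Real.pi)^2 + (vb - 2*ε)/2 * (p.2 - Real.pi)^2 +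
            (-(vc + 2*ε))/2 * ((p.1 - Real.pi) + (p.2 - Real.pi))^2 :=
          quadform_nonneg hFε hAε hBε
        rw [show (p.1 - Real.pi) + (p.2 - Real.pi) = p.1 + p.2 - 2*Real.pi by ring] at hq
        linarith [b1, b2, b3, hq]
      exact hmin
    · rw [hdetK]
      exact ne_of_gt (mul_pos hKpos hSpos)
  · intro hgt
    have hKpos : 0 < q1 * q2 * q3 * (r1 * r2 * r3) := by positivity
    have hid : va * vb - va * vc - vb * vc =
        q1 * q2 * q3 * (r1 * r2 * r3) * (A3 * q3 - A1 * q1 - A2 * q2) := by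
      rw [hA1, hA2, hA3, hva, hvb, hvc]; field_simp; ring
    have hSneg : A3 * q3 - A1 * q1 - A2 * q2 < 0 := by linarith
    have hkey : va * vb < va * vc + vb * vc := by
      linarith [hid, mul_neg_of_pos_of_neg hKpos hSneg]
    have hu1π : 0 < uu r2 r3 Real.pi := by rw [uu_pi]; positivity
    have hu2π : 0 < uu r3 r1 Real.pi := by rw [uu_pi]; positivity
    have hu3g : ∀ s, 0 < uu r1 r2 s := uu_pos hr1 hr2 h12
    have hcc2 : DD2 (q1 * q2) r1 r2 (2 * Real.pi) = -vc := by
      rw [DD2_two_pi _ h12, hvc, hd3]; try ring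
    have hpsi : va * vb^2 + vb * va^2 - vc * (va + vb)^2 < 0 := psi_neg hkey hvap hvbp
    refine ⟨?_, ?_, ?_⟩
    · -- not a local min : descend along direction (vb, va)
      clear hid hdetK hBval e11 e22 e12 e21 hB hgt hSneg hkey hA1 hA2 hA3
      intro hminE
      set G2 : ℝ → ℝ := fun t =>
        -((DD2 (q2*q3) r2 r3 (Real.pi + vb*t) * vb) * vb +
          (DD2 (q3*q1) r3 r1 (Real.pi + va*t) * va) * va +
          (DD2 (q1*q2) r1 r2 (2*Real.pi + (va+vb)*t) * (va+vb)) * (va+vb)) with hG2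
      have hG20 : (0:ℝ) < G2 0 := by
        rw [hG2]
        simp only [mul_zero, add_zero]
        rw [haa, hbb, hcc2]
        nlinarith [hpsi]
      have hG2c : ContinuousAt G2 0 := by
        rw [hG2]
        have l1 : ContinuousAt (fun t : ℝ => Real.pi + vb*t) 0 := by fun_prop
        have l2 : ContinuousAt (fun t : ℝ => Real.pi + va*t) 0 := by fun_prop
        have l3 : ContinuousAt (fun t : ℝ => 2*Real.pi + (va+vb)*t) 0 := by fun_prop
        have c1 : ContinuousAt (fun t : ℝ => DD2 (q2*q3) r2 r3 (Real.pi + vb*t)) 0 := by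
          have h2 : ContinuousAt (DD2 (q2*q3) r2 r3) ((fun t : ℝ => Real.pi + vb*t) 0) := by
            simpa using continuousAt_DD2 (q2*q3) (show 0 < uu r2 r3 (Real.pi + vb*0) by simpa using hu1π)
          exact ContinuousAt.comp (g := DD2 (q2*q3) r2 r3) (f := fun t : ℝ => Real.pi + vb*t) (x := 0) h2 l1
        have c2 : ContinuousAt (fun t : ℝ => DD2 (q3*q1) r3 r1 (Real.pi + va*t)) 0 := by
          have h2 : ContinuousAt (DD2 (q3*q1) r3 r1) ((fun t : ℝ => Real.pi + va*t) 0) := by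
            simpa using continuousAt_DD2 (q3*q1) (show 0 < uu r3 r1 (Real.pi + va*0) by simpa using hu2π)
          exact ContinuousAt.comp (g := DD2 (q3*q1) r3 r1) (f := fun t : ℝ => Real.pi + va*t) (x := 0) h2 l2
        have c3 : ContinuousAt (fun t : ℝ => DD2 (q1*q2) r1 r2 (2*Real.pi + (va+vb)*t)) 0 := by
          have h2 : ContinuousAt (DD2 (q1*q2) r1 r2) ((fun t : ℝ => 2*Real.pi + (va+vb)*t) 0) :=
            continuousAt_DD2 (q1*q2) (hu3g _)
          exact ContinuousAt.comp (g := DD2 (q1*q2) r1 r2) (f := fun t : ℝ => 2*Real.pi + (va+vb)*t) (x := 0) h2 l3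
        fun_prop
      have hu1c : ContinuousAt (fun t : ℝ => uu r2 r3 (Real.pi + vb*t)) 0 := by
        apply ContinuousAt.comp (x := (0:ℝ)) (g := uu r2 r3) (f := fun t : ℝ => Real.pi + vb*t)
        · exact (uu_continuous r2 r3).continuousAt
        · fun_prop
      have hu2c : ContinuousAt (fun t : ℝ => uu r3 r1 (Real.pi + va*t)) 0 := by
        apply ContinuousAt.comp (x := (0:ℝ)) (g := uu r3 r1) (f := fun t : ℝ => Real.pi + va*t)
        · exact (uu_continuous r3 r1).continuousAt
        · fun_prop
      obtain ⟨δ, hδ, hPδ⟩ := extract1 (x0 := (0:ℝ))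
        (((hu1c.eventually_mem (eventually_gt_nhds (show 0 < uu r2 r3 (Real.pi + vb*0) by simpa using hu1π))).and
          ((hu2c.eventually_mem (eventually_gt_nhds (show 0 < uu r3 r1 (Real.pi + va*0) by simpa using hu2π))).and
          (hG2c.eventually_mem (eventually_gt_nhds hG20)))))
      set F : ℝ → ℝ := fun t =>
        -(q2*q3 / chordDist r2 r3 (Real.pi + vb*t) + q3*q1 / chordDist r3 r1 (Real.pi + va*t) +
          q1*q2 / chordDist r1 r2 (2*Real.pi + (va+vb)*t)) with hF
      set F1 : ℝ → ℝ := fun t =>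
        -(DD1 (q2*q3) r2 r3 (Real.pi + vb*t) * vb + DD1 (q3*q1) r3 r1 (Real.pi + va*t) * va +
          DD1 (q1*q2) r1 r2 (2*Real.pi + (va+vb)*t) * (va+vb)) with hF1
      have lin : ∀ (k x0 t : ℝ), HasDerivAt (fun s : ℝ => x0 + k*s) k t := by
        intro k x0 t
        simpa using ((hasDerivAt_id t).const_mul k).const_add x0
      have hdF : ∀ y ∈ Set.Ioo ((0:ℝ) - δ) (0 + δ), HasDerivAt F (F1 y) y := by
        intro y hy
        obtain ⟨hy1, hy2, _⟩ := hPδ y (abs_of_mem_Ioo hy)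
        have c1 := (hasDerivAt_quot (q := q2*q3) hy1).comp y (lin vb Real.pi y)
        have c2 := (hasDerivAt_quot (q := q3*q1) hy2).comp y (lin va Real.pi y)
        have c3 := (hasDerivAt_quot (q := q1*q2) (hu3g _)).comp y (lin (va+vb) (2*Real.pi) y)
        exact ((c1.add c2).add c3).neg
      have hdF1 : ∀ y ∈ Set.Ioo ((0:ℝ) - δ) (0 + δ), HasDerivAt F1 (G2 y) y := by
        intro y hy
        obtain ⟨hy1, hy2, _⟩ := hPδ y (abs_of_mem_Ioo hy)
        have c1 := ((hasDerivAt_DD1 (q2*q3) hy1).comp y (lin vb Real.pi y)).mul_const vb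
        have c2 := ((hasDerivAt_DD1 (q3*q1) hy2).comp y (lin va Real.pi y)).mul_const va
        have c3 := ((hasDerivAt_DD1 (q1*q2) (hu3g _)).comp y (lin (va+vb) (2*Real.pi) y)).mul_const (va+vb)
        exact ((c1.add c2).add c3).neg
      have hF10 : F1 0 = 0 := by
        rw [hF1]
        simp only [mul_zero, add_zero]
        rw [DD1_pi, DD1_pi, DD1_two_pi]
        ring
      have hstrict := key1 (f := F) (f' := F1) (f'' := G2) (x₀ := 0) (δ := δ) (m := 0)
        hdF hdF1 hF10 (fun y hy => (hPδ y (abs_of_mem_Ioo hy)).2.2)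
      have hcur : Filter.Tendsto (fun t : ℝ => ((Real.pi + vb*t, Real.pi + va*t) : ℝ × ℝ))
          (nhds 0) (nhds (Real.pi, Real.pi)) := by
        have hc : Continuous (fun t : ℝ => ((Real.pi + vb*t, Real.pi + va*t) : ℝ × ℝ)) := by
          fun_prop
        have := hc.tendsto 0
        simpa using this
      have hev2 : ∀ᶠ t : ℝ in nhds 0,
          orbitalEnergy q1 q2 q3 r1 r2 r3 (Real.pi, Real.pi) ≤
            orbitalEnergy q1 q2 q3 r1 r2 r3 (Real.pi + vb*t, Real.pi + va*t) :=
        hcur.eventually hminE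
      obtain ⟨δ₂, hδ₂, h2'⟩ := extract1 hev2
      set t0 : ℝ := min δ δ₂ / 2 with ht0
      have ht0pos : 0 < t0 := by rw [ht0]; positivity
      have ht0δ : t0 ∈ Set.Ioo ((0:ℝ) - δ) (0 + δ) := by
        constructor
        · have : (0:ℝ) < δ := hδ; nlinarith [ht0pos]
        · have h1 : t0 ≤ δ/2 := by
            rw [ht0]; have := min_le_left δ δ₂; linarith
          linarith
      have ht0δ₂ : |t0 - 0| < δ₂ := by
        rw [sub_zero, abs_of_pos ht0pos, ht0]
        have := min_le_right δ δ₂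
        linarith
      have h1' := hstrict t0 ht0δ (ne_of_gt ht0pos)
      have h2'' := h2' t0 ht0δ₂
      have hE0 : orbitalEnergy q1 q2 q3 r1 r2 r3 (Real.pi, Real.pi) = -F 0 := by
        rw [E_decomp, hF]
        simp only [mul_zero, add_zero, neg_neg]
        rw [show Real.pi + Real.pi = 2*Real.pi by ring]
      have hEt : orbitalEnergy q1 q2 q3 r1 r2 r3 (Real.pi + vb*t0, Real.pi + va*t0) = -F t0 := by
        rw [E_decomp, hF]
        simp only [neg_neg]
        rw [show Real.pi + vb*t0 + (Real.pi + va*t0) = 2*Real.pi + (va+vb)*t0 by ring]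
      rw [hE0, hEt] at h2''
      simp only [sub_zero] at h1'
      clear_value F F1 G2 t0
      linarith only [h1', h2'']
    · -- not a local max
      clear hid hdetK hBval e11 e22 e12 e21 hB hgt hSneg hkey hpsi hA1 hA2 hA3
      intro hmaxE
      have hcur : Filter.Tendsto (fun t : ℝ => ((Real.pi + t, Real.pi - t) : ℝ × ℝ))
          (nhds 0) (nhds (Real.pi, Real.pi)) := by
        have hc : Continuous (fun t : ℝ => ((Real.pi + t, Real.pi - t) : ℝ × ℝ)) := by fun_prop
        have := hc.tendsto 0
        simpa using this
      have hev2 : ∀ᶠ t : ℝ in nhds 0,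
          orbitalEnergy q1 q2 q3 r1 r2 r3 (Real.pi + t, Real.pi - t) ≤
            orbitalEnergy q1 q2 q3 r1 r2 r3 (Real.pi, Real.pi) :=
        hcur.eventually hmaxE
      obtain ⟨δ₂, hδ₂, h2'⟩ := extract1 hev2
      set t0 : ℝ := min (Real.pi/2) δ₂ / 2 with ht0
      have hπ : (0:ℝ) < Real.pi := Real.pi_pos
      have ht0pos : 0 < t0 := by rw [ht0]; positivity
      have ht0lt : t0 < Real.pi/2 := by
        rw [ht0]
        have := min_le_left (Real.pi/2) δ₂
        linarith [min_le_left (Real.pi/2) δ₂, hπ]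
      have ht0δ₂ : |t0 - 0| < δ₂ := by
        rw [sub_zero, abs_of_pos ht0pos, ht0]
        have := min_le_right (Real.pi/2) δ₂
        linarith
      have hc1 : 0 < Real.cos t0 := Real.cos_pos_of_mem_Ioo ⟨by linarith, ht0lt⟩
      have hc2 : Real.cos t0 < 1 := by
        have h := Real.strictAntiOn_cos (Set.mem_Icc.mpr ⟨le_refl (0:ℝ), hπ.le⟩)
          (Set.mem_Icc.mpr ⟨ht0pos.le, by linarith⟩) ht0pos
        rwa [Real.cos_zero] at h
      have h2'' := h2' t0 ht0δ₂
      rw [E_decomp, E_decomp] at h2''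
      simp only at h2''
      rw [show Real.pi + t0 + (Real.pi - t0) = Real.pi + Real.pi by ring] at h2''
      -- chord values
      have hch1π : chordDist r2 r3 Real.pi = r2 + r3 := by
        rw [show chordDist r2 r3 Real.pi = Real.sqrt (uu r2 r3 Real.pi) from rfl, uu_pi,
          Real.sqrt_sq (by positivity)]
      have hch2π : chordDist r3 r1 Real.pi = r3 + r1 := by
        rw [show chordDist r3 r1 Real.pi = Real.sqrt (uu r3 r1 Real.pi) from rfl, uu_pi,
          Real.sqrt_sq (by positivity)]
      have hu1t : uu r2 r3 (Real.pi + t0) = r2^2 + r3^2 + 2*r2*r3*Real.cos t0 := by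
        rw [uu, Real.cos_add, Real.cos_pi, Real.sin_pi]; ring
      have hu2t : uu r3 r1 (Real.pi - t0) = r3^2 + r1^2 + 2*r3*r1*Real.cos t0 := by
        rw [uu, Real.cos_pi_sub]; ring
      have hu1tpos : 0 < uu r2 r3 (Real.pi + t0) := by rw [hu1t]; nlinarith [mul_pos hr2 hr3]
      have hu2tpos : 0 < uu r3 r1 (Real.pi - t0) := by rw [hu2t]; nlinarith [mul_pos hr3 hr1]
      have hlt1 : chordDist r2 r3 (Real.pi + t0) < r2 + r3 := by
        rw [show chordDist r2 r3 (Real.pi + t0) = Real.sqrt (uu r2 r3 (Real.pi + t0)) from rfl]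
        have hlt : uu r2 r3 (Real.pi + t0) < (r2 + r3)^2 := by
          rw [hu1t]; nlinarith [mul_pos hr2 hr3]
        calc Real.sqrt (uu r2 r3 (Real.pi + t0)) < Real.sqrt ((r2+r3)^2) :=
              Real.sqrt_lt_sqrt hu1tpos.le hlt
          _ = r2 + r3 := Real.sqrt_sq (by positivity)
      have hle2 : chordDist r3 r1 (Real.pi - t0) ≤ r3 + r1 := by
        rw [show chordDist r3 r1 (Real.pi - t0) = Real.sqrt (uu r3 r1 (Real.pi - t0)) from rfl]
        have hle : uu r3 r1 (Real.pi - t0) ≤ (r3 + r1)^2 := by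
          rw [hu2t]; nlinarith [mul_pos hr3 hr1, hc2.le]
        calc Real.sqrt (uu r3 r1 (Real.pi - t0)) ≤ Real.sqrt ((r3+r1)^2) :=
              Real.sqrt_le_sqrt hle
          _ = r3 + r1 := Real.sqrt_sq (by positivity)
      have hchpos1 : 0 < chordDist r2 r3 (Real.pi + t0) := Real.sqrt_pos.mpr hu1tpos
      have hchpos2 : 0 < chordDist r3 r1 (Real.pi - t0) := Real.sqrt_pos.mpr hu2tpos
      have hgt1 : q2*q3 / chordDist r2 r3 Real.pi < q2*q3 / chordDist r2 r3 (Real.pi + t0) := by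
        rw [hch1π]
        exact div_lt_div_of_pos_left (by positivity) hchpos1 hlt1
      have hge2 : q3*q1 / chordDist r3 r1 Real.pi ≤ q3*q1 / chordDist r3 r1 (Real.pi - t0) := by
        rw [hch2π]
        gcongr
      linarith [h2'', hgt1, hge2]
    · rw [hdetK]
      exact ne_of_lt (mul_neg_of_pos_of_neg hKpos hSneg)
end

section
/- Let r > 0 and let p₁, p₂, p₃ be pairwise distinct points in ℝ² lying on a circle of radius r. Then 1/|p₁p₂| + 1/|p₂p₃| + 1/|p₃p₁| ≥ √3/r, with equality if and only if the triangle p₁p₂p₃ is equilateral (i.e. |p₁p₂| = |p₂p₃| = |p₃p₁| = r√3). Consequently, for three equal charges q on a common circle of radius r, the Coulomb energy E = q²(1/|p₁p₂| + 1/|p₂p₃| + 1/|p₃p₁|) attains its unique minimal value q²√3/r exactly at equilateral triangles. -/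
private lemma coulomb_halg (a b c : ℝ) (ha : 0 < a) (hb : 0 < b) (hc : 0 < c) :
    3*(2*a^2*b^2+2*b^2*c^2+2*c^2*a^2-a^4-b^4-c^4) ≤ (a*b+b*c+c*a)^2 := by
  nlinarith [sq_nonneg (a^2-b^2), sq_nonneg (b^2-c^2), sq_nonneg (c^2-a^2),
    mul_nonneg (mul_nonneg ha.le hb.le) (sq_nonneg (a-b)),
    mul_nonneg (mul_nonneg hb.le hc.le) (sq_nonneg (b-c)),
    mul_nonneg (mul_nonneg hc.le ha.le) (sq_nonneg (c-a)),
    mul_nonneg ha.le (sq_nonneg ((a-b)*(a-c))),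
    mul_nonneg hb.le (sq_nonneg ((b-a)*(b-c))),
    mul_nonneg hc.le (sq_nonneg ((c-a)*(c-b)))]

private lemma coulomb_hd (a b c : ℝ) (ha : 0 < a) (hb : 0 < b) (hc : 0 < c)
    (heq : 3*(2*a^2*b^2+2*b^2*c^2+2*c^2*a^2-a^4-b^4-c^4) = (a*b+b*c+c*a)^2) :
    (a^2-b^2)^2 + (b^2-c^2)^2 + (c^2-a^2)^2 ≤ 0 := by
  nlinarith [mul_nonneg (mul_nonneg ha.le hb.le) (sq_nonneg (a-b)),
    mul_nonneg (mul_nonneg hb.le hc.le) (sq_nonneg (b-c)),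
    mul_nonneg (mul_nonneg hc.le ha.le) (sq_nonneg (c-a)),
    mul_nonneg ha.le (sq_nonneg ((a-b)*(a-c))),
    mul_nonneg hb.le (sq_nonneg ((b-a)*(b-c))),
    mul_nonneg hc.le (sq_nonneg ((c-a)*(c-b)))]

private lemma coulomb_aux (r a b c : ℝ) (hr : 0 < r) (ha : 0 < a) (hb : 0 < b) (hc : 0 < c)
    (hkey : a^2*b^2*c^2 = r^2*(2*a^2*b^2+2*b^2*c^2+2*c^2*a^2-a^4-b^4-c^4)) :
    Real.sqrt 3 / r ≤ 1/a + 1/b + 1/c ∧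
      (1/a + 1/b + 1/c = Real.sqrt 3 / r ↔
        a = r*Real.sqrt 3 ∧ b = r*Real.sqrt 3 ∧ c = r*Real.sqrt 3) := by
  set s := Real.sqrt 3 with hs_def
  have hs : s^2 = 3 := Real.sq_sqrt (by norm_num)
  have hs0 : 0 < s := Real.sqrt_pos.mpr (by norm_num)
  have habc : 0 < a*b*c := by positivity
  have hsum : (1:ℝ)/a + 1/b + 1/c = (a*b+b*c+c*a)/(a*b*c) := by field_simp; ring
  have halg := coulomb_halg a b c ha hb hc
  have he : (s*(a*b*c))^2 = r^2*(3*(2*a^2*b^2+2*b^2*c^2+2*c^2*a^2-a^4-b^4-c^4)) := by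
    linear_combination (a*b*c)^2*hs + 3*hkey
  have hsq : (s*(a*b*c))^2 ≤ (r*(a*b+b*c+c*a))^2 := by
    calc (s*(a*b*c))^2 = r^2*(3*(2*a^2*b^2+2*b^2*c^2+2*c^2*a^2-a^4-b^4-c^4)) := he
    _ ≤ r^2*((a*b+b*c+c*a)^2) := mul_le_mul_of_nonneg_left halg (sq_nonneg r)
    _ = (r*(a*b+b*c+c*a))^2 := by ring
  have hX : 0 ≤ s*(a*b*c) := by positivity
  have hY : (0:ℝ) ≤ r*(a*b+b*c+c*a) := by positivity
  have hstep : s*(a*b*c) ≤ r*(a*b+b*c+c*a) := by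
    have := Real.sqrt_le_sqrt hsq
    rwa [Real.sqrt_sq hX, Real.sqrt_sq hY] at this
  have hmain : s / r ≤ 1/a + 1/b + 1/c := by
    rw [hsum, div_le_div_iff₀ hr habc]
    nlinarith [hstep]
  refine ⟨hmain, ?_, ?_⟩
  · intro h
    rw [hsum] at h
    have hcross : s*(a*b*c) = r*(a*b+b*c+c*a) := by
      have := (div_eq_div_iff habc.ne' hr.ne').mp h
      linarith
    have heq : 3*(2*a^2*b^2+2*b^2*c^2+2*c^2*a^2-a^4-b^4-c^4) = (a*b+b*c+c*a)^2 := by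
      have hr2 : (r:ℝ)^2 ≠ 0 := by positivity
      apply mul_left_cancel₀ hr2
      linear_combination (-3:ℝ)*hkey - (a*b*c)^2*hs + (r*(a*b+b*c+c*a) + s*(a*b*c))*hcross
    have hd := coulomb_hd a b c ha hb hc heq
    have z1 : (a^2-b^2)^2 = 0 :=
      le_antisymm (by linarith [sq_nonneg (b^2-c^2), sq_nonneg (c^2-a^2)]) (sq_nonneg _)
    have z2 : (b^2-c^2)^2 = 0 :=
      le_antisymm (by linarith [sq_nonneg (a^2-b^2), sq_nonneg (c^2-a^2)]) (sq_nonneg _)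
    have e1 : a^2 = b^2 := by
      have := pow_eq_zero_iff (n := 2) (by norm_num) |>.mp z1; linarith [sub_eq_zero.mp this]
    have e2 : b^2 = c^2 := by
      have := pow_eq_zero_iff (n := 2) (by norm_num) |>.mp z2; linarith [sub_eq_zero.mp this]
    have hab : a = b := (sq_eq_sq₀ ha.le hb.le).mp e1
    have hbc : b = c := (sq_eq_sq₀ hb.le hc.le).mp e2
    have ha2 : a^2 = 3*r^2 := by
      have h4 : (a:ℝ)^4 ≠ 0 := by positivity
      apply mul_right_cancel₀ h4
      have hb' : b = a := hab.symm
      have hc' : c = a := (hab.trans hbc).symm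
      subst hb'; subst hc'
      linear_combination hkey
    have hars : a = r*s := by
      have h5 : (r*s)^2 = 3*r^2 := by rw [mul_pow, hs]; ring
      exact (sq_eq_sq₀ ha.le (by positivity)).mp (by rw [ha2, h5])
    exact ⟨hars, hab.symm.trans hars, (hab.trans hbc).symm.trans hars⟩
  · rintro ⟨e1, e2, e3⟩
    rw [e1, e2, e3]
    have hrs : (r*s) ≠ 0 := by positivity
    field_simp
    linear_combination (-1:ℝ)*hs

private lemma coulomb_gram (u1 u2 v1 v2 w1 w2 : ℝ) :
    (u1^2+u2^2)*(v1^2+v2^2)*(w1^2+w2^2) + 2*(u1*v1+u2*v2)*(v1*w1+v2*w2)*(w1*u1+w2*u2)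
      - (u1^2+u2^2)*(v1*w1+v2*w2)^2 - (v1^2+v2^2)*(w1*u1+w2*u2)^2
      - (w1^2+w2^2)*(u1*v1+u2*v2)^2 = 0 := by ring

set_option maxHeartbeats 1000000 in
/-- For three pairwise distinct points on a circle of radius `r`,
`1/|p₁p₂| + 1/|p₂p₃| + 1/|p₃p₁| ≥ √3/r`, with equality iff the triangle is equilateral
(all side lengths `r√3`); hence for equal charges `q` the Coulomb energy attains its
minimal value `q²√3/r` exactly at equilateral triangles. -/
theorem equal_charges_on_circle_min
    (r : ℝ) (hr : 0 < r)
    (c p1 p2 p3 : EuclideanSpace ℝ (Fin 2))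
    (h1 : dist p1 c = r) (h2 : dist p2 c = r) (h3 : dist p3 c = r)
    (h12 : p1 ≠ p2) (h23 : p2 ≠ p3) (h31 : p3 ≠ p1) :
    (Real.sqrt 3 / r ≤ 1 / dist p1 p2 + 1 / dist p2 p3 + 1 / dist p3 p1) ∧
    (1 / dist p1 p2 + 1 / dist p2 p3 + 1 / dist p3 p1 = Real.sqrt 3 / r ↔
      dist p1 p2 = r * Real.sqrt 3 ∧ dist p2 p3 = r * Real.sqrt 3 ∧
        dist p3 p1 = r * Real.sqrt 3) ∧
    (∀ q : ℝ, 0 < q →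
      (q ^ 2 * Real.sqrt 3 / r ≤
        q ^ 2 * (1 / dist p1 p2 + 1 / dist p2 p3 + 1 / dist p3 p1)) ∧
      (q ^ 2 * (1 / dist p1 p2 + 1 / dist p2 p3 + 1 / dist p3 p1) =
          q ^ 2 * Real.sqrt 3 / r ↔
        dist p1 p2 = r * Real.sqrt 3 ∧ dist p2 p3 = r * Real.sqrt 3 ∧
          dist p3 p1 = r * Real.sqrt 3)) := by
  have dist_sq : ∀ p q : EuclideanSpace ℝ (Fin 2),
      dist p q ^ 2 = (p 0 - q 0)^2 + (p 1 - q 1)^2 := by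
    intro p q
    rw [EuclideanSpace.dist_eq, Real.sq_sqrt (by positivity), Fin.sum_univ_two]
    simp [Real.dist_eq, sq_abs]
  have hA : (p1 0 - c 0)^2 + (p1 1 - c 1)^2 = r^2 := by rw [← dist_sq p1 c, h1]
  have hB : (p2 0 - c 0)^2 + (p2 1 - c 1)^2 = r^2 := by rw [← dist_sq p2 c, h2]
  have hC : (p3 0 - c 0)^2 + (p3 1 - c 1)^2 = r^2 := by rw [← dist_sq p3 c, h3]
  have ha2 : dist p1 p2 ^2 = ((p1 0 - c 0)-(p2 0 - c 0))^2 + ((p1 1 - c 1)-(p2 1 - c 1))^2 := by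
    rw [dist_sq]; ring
  have hb2 : dist p2 p3 ^2 = ((p2 0 - c 0)-(p3 0 - c 0))^2 + ((p2 1 - c 1)-(p3 1 - c 1))^2 := by
    rw [dist_sq]; ring
  have hc2 : dist p3 p1 ^2 = ((p3 0 - c 0)-(p1 0 - c 0))^2 + ((p3 1 - c 1)-(p1 1 - c 1))^2 := by
    rw [dist_sq]; ring
  have ha : 0 < dist p1 p2 := dist_pos.mpr h12
  have hb : 0 < dist p2 p3 := dist_pos.mpr h23
  have hc : 0 < dist p3 p1 := dist_pos.mpr h31
  set x1 := p1 0 - c 0; set y1 := p1 1 - c 1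
  set x2 := p2 0 - c 0; set y2 := p2 1 - c 1
  set x3 := p3 0 - c 0; set y3 := p3 1 - c 1
  set a := dist p1 p2; set b := dist p2 p3; set cc := dist p3 p1
  have hgram := coulomb_gram x1 y1 x2 y2 x3 y3
  rw [hA, hB, hC] at hgram
  have hx : x1*x2 + y1*y2 = r^2 - a^2/2 := by linear_combination (1/2:ℝ)*ha2 + (1/2:ℝ)*hA + (1/2:ℝ)*hB
  have hy : x2*x3 + y2*y3 = r^2 - b^2/2 := by linear_combination (1/2:ℝ)*hb2 + (1/2:ℝ)*hB + (1/2:ℝ)*hC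
  have hz : x3*x1 + y3*y1 = r^2 - cc^2/2 := by linear_combination (1/2:ℝ)*hc2 + (1/2:ℝ)*hC + (1/2:ℝ)*hA
  rw [hx, hy, hz] at hgram
  have hkey : a^2*b^2*cc^2 = r^2*(2*a^2*b^2+2*b^2*cc^2+2*cc^2*a^2-a^4-b^4-cc^4) := by
    linear_combination (-4:ℝ) * hgram
  obtain ⟨hmain, hiff⟩ := coulomb_aux r a b cc hr ha hb hc hkey
  refine ⟨hmain, hiff, ?_⟩
  intro q hq
  have hq2 : (q:ℝ)^2 ≠ 0 := by positivity
  constructor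
  · rw [mul_div_assoc]
    exact mul_le_mul_of_nonneg_left hmain (sq_nonneg q)
  · rw [mul_div_assoc]
    constructor
    · intro h
      exact hiff.mp (mul_left_cancel₀ hq2 h)
    · intro h
      rw [hiff.mpr h]
end
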